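/- (Pinsker–Kelley) A Boolean σ-algebra B carries a measure if and only if B is weakly distributive and carries a strictly positive finitely additive measure. -/

import Mathlib

universe u

/-- A Boolean σ-algebra: a Boolean algebra in which every countable subset
(equivalently, every `ℕ`-indexed sequence) has a supremum. -/
class BooleanSigmaAlgebra (α : Type u) extends BooleanAlgebra α where
  seqSup : (ℕ → α) → α
  le_seqSup : ∀ (f : ℕ → α) (n : ℕ), f n ≤ seqSup f
  seqSup_le : ∀ (f : ℕ → α) (b : α), (∀ n, f n ≤ b) → seqSup f ≤ b

namespace BooleanSigmaAlgebra

variable {α : Type u} [BooleanSigmaAlgebra α]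

/-- Countable infimum, derived from countable suprema via complements. -/
def seqInf (f : ℕ → α) : α := (seqSup fun n => (f n)ᶜ)ᶜ

/-- `limsup_n a_n = ⋀_n ⋁_{k ≥ n} a_k`. -/
def blimsup (f : ℕ → α) : α := seqInf fun n => seqSup fun k => f (n + k)

/-- `liminf_n a_n = ⋁_n ⋀_{k ≥ n} a_k`. -/
def bliminf (f : ℕ → α) : α := seqSup fun n => seqInf fun k => f (n + k)

/-- The sequence `a_n` converges to `0`, i.e. `limsup_n a_n = 0` (which is
equivalent to `lim_n a_n = 0`). -/
def TendstoBot (f : ℕ → α) : Prop := blimsup f = ⊥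

/-- The sequence `a_n` converges to `1`, i.e. `liminf_n a_n = 1` (which is
equivalent to `lim_n a_n = 1`). -/
def TendstoTop (f : ℕ → α) : Prop := bliminf f = ⊤

/-- An antichain: a set of nonzero pairwise disjoint elements. -/
def IsAC (A : Set α) : Prop := ⊥ ∉ A ∧ A.Pairwise fun a b => a ⊓ b = ⊥

/-- A maximal antichain: an antichain such that every nonzero element meets
some member of it. -/
def IsMaxAC (W : Set α) : Prop := IsAC W ∧ ∀ b : α, b ≠ ⊥ → ∃ w ∈ W, w ⊓ b ≠ ⊥

/-- A countable maximal antichain. -/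
def IsCMA (W : Set α) : Prop := W.Countable ∧ IsMaxAC W

/-- `B` is weakly distributive: every sequence `{W_n}` of countable maximal
antichains admits finite subsets `E_n ⊆ W_n` with `lim_n ⋁E_n = 1`. -/
def WeaklyDistributive (α : Type u) [BooleanSigmaAlgebra α] : Prop :=
  ∀ W : ℕ → Set α, (∀ n, IsCMA (W n)) →
    ∃ E : ℕ → Finset α, (∀ n, ↑(E n) ⊆ W n) ∧ TendstoTop fun n => (E n).sup id

/-- `B` is uniformly weakly distributive: there are functions `F_n` assigning
to each countable maximal antichain `W` a finite subset `F_n(W) ⊆ W` such that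
for every sequence `{W_n}` of countable maximal antichains,
`lim_n ⋁F_n(W_n) = 1`. -/
def UniformlyWeaklyDistributive (α : Type u) [BooleanSigmaAlgebra α] : Prop :=
  ∃ F : ℕ → Set α → Finset α,
    (∀ (n : ℕ) (W : Set α), IsCMA W → ↑(F n W) ⊆ W) ∧
    ∀ W : ℕ → Set α, (∀ n, IsCMA (W n)) → TendstoTop fun n => (F n (W n)).sup id

/-- `B` is uniformly concentrated: there is a function `F` assigning to each
finite antichain `A` an element `F(A) ∈ A` such that for every sequence `{A_n}`
of finite antichains with `|A_n| ≥ 2^n`, `lim_n F(A_n) = 0`. -/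
def UniformlyConcentrated (α : Type u) [BooleanSigmaAlgebra α] : Prop :=
  ∃ F : Finset α → α,
    (∀ A : Finset α, A.Nonempty → IsAC (↑A : Set α) → F A ∈ A) ∧
    ∀ A : ℕ → Finset α, (∀ n, IsAC (↑(A n) : Set α) ∧ 2 ^ n ≤ (A n).card) →
      TendstoBot fun n => F (A n)

/-- `B` is concentrated: for every sequence `{A_n}` of finite antichains with
`|A_n| ≥ 2^n` there are `a_n ∈ A_n` with `lim_n a_n = 0`. -/
def Concentrated (α : Type u) [BooleanSigmaAlgebra α] : Prop :=
  ∀ A : ℕ → Finset α, (∀ n, IsAC (↑(A n) : Set α) ∧ 2 ^ n ≤ (A n).card) →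
    ∃ a : ℕ → α, (∀ n, a n ∈ A n) ∧ TendstoBot a

/-- A strictly positive finitely additive (probability) measure on `B`. -/
structure IsFinAddMeasure (m : α → ℝ) : Prop where
  map_bot : m ⊥ = 0
  pos : ∀ a : α, a ≠ ⊥ → 0 < m a
  map_top : m ⊤ = 1
  mono : ∀ a b : α, a ≤ b → m a ≤ m b
  add : ∀ a b : α, a ⊓ b = ⊥ → m (a ⊔ b) = m a + m b

/-- A (strictly positive, σ-additive, probability) measure on `B`. -/
structure IsMeasure (m : α → ℝ) extends IsFinAddMeasure m : Prop where
  sigma_add : ∀ f : ℕ → α, (∀ i j : ℕ, i ≠ j → f i ⊓ f j = ⊥) →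
    HasSum (fun n => m (f n)) (m (seqSup f))

/-- A measure algebra: a Boolean σ-algebra carrying a measure. -/
def IsMeasureAlgebra (α : Type u) [BooleanSigmaAlgebra α] : Prop :=
  ∃ m : α → ℝ, IsMeasure m

/-- A fragmentation of `B`: an increasing sequence of upward closed subsets of
`B ∖ {0}` whose union is `B ∖ {0}`. -/
structure IsFragmentation (C : ℕ → Set α) : Prop where
  mono : ∀ n, C n ⊆ C (n + 1)
  not_bot : ∀ n, ⊥ ∉ C n
  upward : ∀ (n : ℕ) (a b : α), a ∈ C n → a ≤ b → b ∈ C n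
  covers : ∀ a : α, a ≠ ⊥ → ∃ n, a ∈ C n

/-- A fragmentation is tight if `a_n ∉ C_n` for all `n` implies `lim_n a_n = 0`. -/
def Tight (C : ℕ → Set α) : Prop :=
  ∀ a : ℕ → α, (∀ n, a n ∉ C n) → TendstoBot a

/-- A fragmentation is σ-bounded cc if for every `n` there is a bound `K_n` on
the size of antichains contained in `C_n`. -/
def SigmaBoundedCC (C : ℕ → Set α) : Prop :=
  ∀ n : ℕ, ∃ K : ℕ, ∀ A : Set α, A ⊆ C n → IsAC A → A.Finite ∧ A.ncard ≤ K

/-- A fragmentation is σ-finite cc if every antichain contained in some `C_n`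
is finite. -/
def SigmaFiniteCC (C : ℕ → Set α) : Prop :=
  ∀ n : ℕ, ∀ A : Set α, A ⊆ C n → IsAC A → A.Finite

/-- A fragmentation is `G_δ` if for every `n` no sequence of elements of `C_n`
converges to `0`. -/
def GDelta (C : ℕ → Set α) : Prop :=
  ∀ (n : ℕ) (a : ℕ → α), (∀ k, a k ∈ C n) → ¬ TendstoBot a

/-- A fragmentation is graded if `a ⊔ b ∈ C_n` implies `a ∈ C_{n+1}` or
`b ∈ C_{n+1}`. -/
def Graded (C : ℕ → Set α) : Prop :=
  ∀ (n : ℕ) (a b : α), a ⊔ b ∈ C n → a ∈ C (n + 1) ∨ b ∈ C (n + 1)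

-- order lemmas
theorem seqInf_le (f : ℕ → α) (n : ℕ) : seqInf f ≤ f n := by
  have := le_seqSup (fun n => (f n)ᶜ) n
  simpa [seqInf] using compl_le_compl this

theorem le_seqInf (f : ℕ → α) (b : α) (h : ∀ n, b ≤ f n) : b ≤ seqInf f := by
  have : seqSup (fun n => (f n)ᶜ) ≤ bᶜ :=
    seqSup_le _ _ fun n => compl_le_compl (h n)
  simpa [seqInf] using compl_le_compl this

theorem seqSup_mono {f g : ℕ → α} (h : ∀ n, f n ≤ g n) : seqSup f ≤ seqSup g :=
  seqSup_le _ _ fun n => (h n).trans (le_seqSup g n)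

theorem inf_seqSup (a : α) (f : ℕ → α) :
    a ⊓ seqSup f = seqSup fun n => a ⊓ f n := by
  apply le_antisymm
  · have h1 : seqSup f ≤ aᶜ ⊔ seqSup fun n => a ⊓ f n := by
      apply seqSup_le
      intro n
      have : f n = (f n ⊓ a) ⊔ (f n ⊓ aᶜ) := by
        rw [← inf_sup_left, sup_comm, compl_sup_eq_top, inf_top_eq]
      rw [this]
      apply sup_le
      · exact le_sup_of_le_right ((inf_comm (f n) a).le.trans (le_seqSup (fun n => a ⊓ f n) n))
      · exact le_sup_of_le_left inf_le_right
    calc a ⊓ seqSup f ≤ a ⊓ (aᶜ ⊔ seqSup fun n => a ⊓ f n) :=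
          inf_le_inf_left a h1
      _ ≤ seqSup fun n => a ⊓ f n := by
          rw [inf_sup_left, inf_compl_eq_bot]; simp
  · exact seqSup_le _ _ fun n => le_inf inf_le_left (inf_le_right.trans (le_seqSup f n))



-- disjointification
def dj (f : ℕ → α) (n : ℕ) : α := f n ⊓ ((Finset.range n).sup f)ᶜ

theorem dj_le (f : ℕ → α) (n : ℕ) : dj f n ≤ f n := inf_le_left

theorem dj_disj (f : ℕ → α) {i j : ℕ} (h : i ≠ j) : dj f i ⊓ dj f j = ⊥ := by
  wlog hij : i < j generalizing i j
  · rw [inf_comm]; exact this h.symm (by omega)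
  have h1 : dj f j ≤ (f i)ᶜ := by
    refine inf_le_right.trans (compl_le_compl ?_)
    exact Finset.le_sup (Finset.mem_range.mpr hij)
  have h2 : dj f i ⊓ dj f j ≤ f i ⊓ (f i)ᶜ := inf_le_inf (dj_le f i) h1
  simpa using le_bot_iff.mp (by simpa using h2)

theorem le_seqSup_dj (f : ℕ → α) (n : ℕ) : f n ≤ seqSup (dj f) := by
  induction n using Nat.strong_induction_on with
  | _ n ih =>
    have hdecomp : f n = dj f n ⊔ (f n ⊓ (Finset.range n).sup f) := by
      rw [dj, ← inf_sup_left, compl_sup_eq_top, inf_top_eq]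
    rw [hdecomp]
    apply sup_le (le_seqSup (dj f) n)
    refine inf_le_right.trans (Finset.sup_le fun i hi => ?_)
    exact ih i (Finset.mem_range.mp hi)

theorem seqSup_dj (f : ℕ → α) : seqSup (dj f) = seqSup f :=
  le_antisymm (seqSup_mono fun n => dj_le f n) (seqSup_le _ _ fun n => le_seqSup_dj f n)


-- finitely additive measure basics
theorem IsFinAddMeasure.nonneg {m : α → ℝ} (hm : IsFinAddMeasure m) (a : α) : 0 ≤ m a := by
  rcases eq_or_ne a ⊥ with rfl | h
  · exact hm.map_bot.ge
  · exact (hm.pos a h).le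

theorem IsFinAddMeasure.subadd {m : α → ℝ} (hm : IsFinAddMeasure m) (a b : α) :
    m (a ⊔ b) ≤ m a + m b := by
  have h1 : a ⊔ b = a ⊔ (aᶜ ⊓ b) := by
    rw [sup_inf_left, sup_compl_eq_top, top_inf_eq]
  rw [h1, hm.add a (aᶜ ⊓ b) (by rw [← inf_assoc, inf_compl_eq_bot, bot_inf_eq])]
  exact add_le_add le_rfl (hm.mono _ _ inf_le_right)

theorem IsFinAddMeasure.finsetSup_le_sum {m : α → ℝ} (hm : IsFinAddMeasure m)
    (s : Finset α) : m (s.sup id) ≤ ∑ e ∈ s, m e := by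
  classical
  induction s using Finset.induction_on with
  | empty => simpa using hm.map_bot.le
  | insert e t hnotmem ih =>
    rw [Finset.sup_insert, Finset.sum_insert hnotmem]
    exact (hm.subadd _ _).trans (add_le_add le_rfl ih)

theorem IsFinAddMeasure.finsetSup_sum {m : α → ℝ} (hm : IsFinAddMeasure m)
    (f : ℕ → α) (hdisj : ∀ i j : ℕ, i ≠ j → f i ⊓ f j = ⊥) (N : ℕ) :
    m ((Finset.range N).sup f) = ∑ i ∈ Finset.range N, m (f i) := by
  induction N with
  | zero => simpa using hm.map_bot
  | succ N ih =>
    rw [Finset.range_add_one, Finset.sup_insert, Finset.sum_insert (by simp),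
      sup_comm, hm.add, ih, add_comm]
    rw [Finset.sup_inf_distrib_right]
    exact (Finset.sup_eq_bot_iff _ _).mpr fun i hi =>
      hdisj i N (by simp at hi; omega)

theorem compl_seqInf (f : ℕ → α) : (seqInf f)ᶜ = seqSup fun n => (f n)ᶜ := by
  rw [seqInf, compl_compl]

theorem IsMeasure.seqSup_le_tsum {m : α → ℝ} (hm : IsMeasure m) (h : ℕ → α)
    (g : ℕ → ℝ) (hg : Summable g) (hle : ∀ n, m (h n) ≤ g n) :
    m (seqSup h) ≤ ∑' n, g n := by
  have hs : HasSum (fun n => m (dj h n)) (m (seqSup (dj h))) :=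
    hm.sigma_add (dj h) fun i j hij => dj_disj h hij
  rw [← seqSup_dj h, hs.tsum_eq.symm]
  exact Summable.tsum_le_tsum (fun n => (hm.mono _ _ (dj_le h n)).trans (hle n)) hs.summable hg

theorem IsFinAddMeasure.compl {m : α → ℝ} (hm : IsFinAddMeasure m) (a : α) :
    m aᶜ = 1 - m a := by
  have := hm.add a aᶜ inf_compl_eq_bot
  rw [sup_compl_eq_top, hm.map_top] at this
  linarith

theorem IsFinAddMeasure.eq_top {m : α → ℝ} (hm : IsFinAddMeasure m) {a : α}
    (h : 1 ≤ m a) : a = ⊤ := by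
  by_contra hne
  have h1 : aᶜ ≠ ⊥ := fun hb => hne (compl_eq_bot.mp hb)
  have := hm.pos aᶜ h1
  rw [hm.compl a] at this
  linarith

open scoped Classical in
theorem erase_bot_sup (t : Finset α) : (t.erase ⊥).sup id = t.sup id := by
  classical
  refine le_antisymm (Finset.sup_mono (Finset.erase_subset _ _)) (Finset.sup_le fun e he => ?_)
  rcases eq_or_ne e ⊥ with rfl | hne
  · exact bot_le
  · exact Finset.le_sup (Finset.mem_erase.mpr ⟨hne, he⟩)

theorem cma_finset {m : α → ℝ} (hm : IsMeasure m) {W : Set α} (hW : IsCMA W)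
    {δ : ℝ} (hδ : 0 < δ) :
    ∃ E : Finset α, ↑E ⊆ W ∧ 1 - δ < m (E.sup id) := by
  classical
  have htop : (⊤:α) ≠ ⊥ := fun h => by
    have h1 := hm.map_top; rw [h, hm.map_bot] at h1; norm_num at h1
  obtain ⟨w, hw, -⟩ := hW.2.2 ⊤ htop
  obtain ⟨g, hg⟩ := hW.1.exists_eq_range ⟨w, hw⟩
  set f : ℕ → α := fun n => if ∃ i, i < n ∧ g i = g n then ⊥ else g n with hf
  have hgW : ∀ n, g n ∈ W := fun n => hg ▸ Set.mem_range_self n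
  have hfW : ∀ n, f n = ⊥ ∨ f n ∈ W := by
    intro n; by_cases h : ∃ i, i < n ∧ g i = g n
    · left; simp [hf, h]
    · right; simpa [hf, h] using hgW n
  have hfle : ∀ n, f n ≤ g n := by
    intro n; by_cases h : ∃ i, i < n ∧ g i = g n <;> simp [hf, h]
  have hdisjW : ∀ x ∈ W, ∀ y ∈ W, x ≠ y → x ⊓ y = ⊥ := fun x hx y hy hxy =>
    hW.2.1.2 hx hy hxy
  have hdisj : ∀ i j : ℕ, i ≠ j → f i ⊓ f j = ⊥ := by
    have key : ∀ i j : ℕ, i < j → f i ⊓ f j = ⊥ := by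
      intro i j hij
      by_cases h : ∃ i', i' < j ∧ g i' = g j
      · simp [hf, h]
      · have hfj : f j = g j := by simp [hf, h]
        have hne : g i ≠ g j := fun he => h ⟨i, hij, he⟩
        have hle2 : f i ⊓ f j ≤ ⊥ := by
          calc f i ⊓ f j ≤ g i ⊓ g j := inf_le_inf (hfle i) (hfj ▸ le_refl _)
            _ = ⊥ := hdisjW _ (hgW i) _ (hgW j) hne
        exact le_bot_iff.mp hle2
    intro i j hij
    rcases lt_or_gt_of_ne hij with h | h
    · exact key i j h
    · rw [inf_comm]; exact key j i h
  have hsup : seqSup f = ⊤ := by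
    have hle : ∀ n, g n ≤ seqSup f := by
      intro n
      have hex : ∃ i, g i = g n := ⟨n, rfl⟩
      set i0 := Nat.find hex with hi0
      have hval : g i0 = g n := Nat.find_spec hex
      have hnd : ¬∃ i', i' < i0 ∧ g i' = g i0 := by
        rintro ⟨i', hlt, heq⟩
        exact Nat.find_min hex hlt (heq.trans hval)
      have : f i0 = g i0 := by simp [hf, hnd]
      calc g n = f i0 := by rw [this, hval]
        _ ≤ seqSup f := le_seqSup f i0
    by_contra hne
    have h1 : (seqSup f)ᶜ ≠ ⊥ := fun hb => hne (compl_eq_bot.mp hb)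
    obtain ⟨w', hw', hmeet⟩ := hW.2.2 _ h1
    obtain ⟨n, rfl⟩ := hg ▸ hw'
    exact hmeet (le_bot_iff.mp (le_trans (inf_le_inf_right _ (hle n)) (by simp)))
  have hhs : HasSum (fun n => m (f n)) 1 := by
    have := hm.sigma_add f hdisj
    rwa [hsup, hm.map_top] at this
  have htend := hhs.tendsto_sum_nat
  have : ∀ᶠ N in Filter.atTop, 1 - δ < ∑ i ∈ Finset.range N, m (f i) := by
    have : Set.Ioi (1 - δ) ∈ nhds (1:ℝ) := Ioi_mem_nhds (by linarith)
    exact htend.eventually_mem this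
  obtain ⟨N, hN⟩ := this.exists
  refine ⟨((Finset.range N).image f).erase ⊥, ?_, ?_⟩
  · intro e he
    simp only [Finset.coe_erase, Set.mem_diff, Finset.coe_image] at he
    obtain ⟨⟨i, _, rfl⟩, hne⟩ := he
    rcases hfW i with h | h
    · exact absurd h (by simpa using hne)
    · exact h
  · rw [erase_bot_sup, Finset.sup_image]
    have : (Finset.range N).sup (id ∘ f) = (Finset.range N).sup f := rfl
    rw [this, hm.finsetSup_sum f hdisj N]
    exact hN

theorem IsMeasure.weaklyDistributive {m : α → ℝ} (hm : IsMeasure m) :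
    WeaklyDistributive α := by
  intro W hW
  have key : ∀ n : ℕ, ∃ E : Finset α, ↑E ⊆ W n ∧ 1 - (1/2:ℝ)^n < m (E.sup id) :=
    fun n => cma_finset hm (hW n) (by positivity)
  choose E hE hEm using key
  refine ⟨E, hE, ?_⟩
  set b : ℕ → α := fun n => (E n).sup id with hb
  set t : ℕ → α := fun n => seqInf fun k => b (n + k) with ht
  have hcb : ∀ n, m ((b n)ᶜ) ≤ (1/2:ℝ)^n := by
    intro n; rw [hm.compl]; linarith [hEm n]
  have htc : ∀ n, m ((t n)ᶜ) ≤ 2 * (1/2:ℝ)^n := by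
    intro n
    rw [ht]
    simp only []
    rw [compl_seqInf]
    have hsum : Summable (fun k => ((1:ℝ)/2)^(n+k)) := by
      simp only [pow_add]
      exact (summable_geometric_of_lt_one (by norm_num) (by norm_num)).mul_left _
    have := hm.seqSup_le_tsum (fun k => (b (n+k))ᶜ) (fun k => (1/2:ℝ)^(n+k)) hsum
      (fun k => hcb (n+k))
    refine this.trans ?_
    have : ∑' k : ℕ, ((1:ℝ)/2)^(n+k) = (1/2)^n * 2 := by
      simp only [pow_add]
      rw [tsum_mul_left, tsum_geometric_two]
    rw [this]; ring_nf; rfl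
  have hfin : m ((seqSup t)ᶜ) ≤ 0 := by
    by_contra hpos
    push_neg at hpos
    obtain ⟨n, hn⟩ := exists_pow_lt_of_lt_one (x := m ((seqSup t)ᶜ) / 2)
      (by linarith) (show (1:ℝ)/2 < 1 by norm_num)
    have h1 : m ((seqSup t)ᶜ) ≤ m ((t n)ᶜ) :=
      hm.mono _ _ (compl_le_compl (le_seqSup t n))
    have := htc n
    linarith
  have hbot : (seqSup t)ᶜ = ⊥ := by
    by_contra hne
    exact absurd hfin (not_le.mpr (hm.pos _ hne))
  exact compl_eq_bot.mp hbot

-- the premeasure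
open ENNReal
noncomputable def pm (m : α → ℝ) (a : α) : ℝ≥0∞ :=
  ⨅ c : {c : ℕ → α // a ≤ seqSup c}, ∑' n, ENNReal.ofReal (m (c.1 n))

theorem pm_le_of_cover (m : α → ℝ) {a : α} {c : ℕ → α} (h : a ≤ seqSup c) :
    pm m a ≤ ∑' n, ENNReal.ofReal (m (c n)) :=
  iInf_le (fun c : {c : ℕ → α // a ≤ seqSup c} => ∑' n, ENNReal.ofReal (m (c.1 n))) ⟨c, h⟩

theorem le_pm (m : α → ℝ) {a : α} {x : ℝ≥0∞}
    (h : ∀ c : ℕ → α, a ≤ seqSup c → x ≤ ∑' n, ENNReal.ofReal (m (c n))) :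
    x ≤ pm m a :=
  le_iInf fun c => h c.1 c.2

theorem single_cover (a : α) : a ≤ seqSup (fun n => if n = 0 then a else ⊥) := by
  have := le_seqSup (fun n => if n = 0 then a else ⊥) 0
  simpa using this

theorem pm_le_ofReal {m : α → ℝ} (hm : IsFinAddMeasure m) (a : α) :
    pm m a ≤ ENNReal.ofReal (m a) := by
  refine (pm_le_of_cover m (single_cover a)).trans ?_
  rw [tsum_eq_single 0 (by intro n hn; simp [hn, hm.map_bot])]
  simp

theorem pm_ne_top {m : α → ℝ} (hm : IsFinAddMeasure m) (a : α) : pm m a ≠ ⊤ :=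
  ((pm_le_ofReal hm a).trans_lt ENNReal.ofReal_lt_top).ne

theorem pm_bot {m : α → ℝ} (hm : IsFinAddMeasure m) : pm m ⊥ = 0 :=
  le_antisymm (by simpa [hm.map_bot] using pm_le_ofReal hm ⊥) zero_le

theorem pm_mono (m : α → ℝ) {a b : α} (hab : a ≤ b) : pm m a ≤ pm m b :=
  le_pm m fun c hc => pm_le_of_cover m (hab.trans hc)

theorem cover_inf {a x : α} {c : ℕ → α} (h : a ≤ seqSup c) (hax : a ≤ x) :
    a ≤ seqSup fun n => x ⊓ c n := by
  have : a = x ⊓ a := (inf_eq_right.mpr hax).symm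
  rw [this]
  calc x ⊓ a ≤ x ⊓ seqSup c := inf_le_inf_left x h
    _ = seqSup fun n => x ⊓ c n := inf_seqSup x c

-- σ-subadditivity of pm
theorem pm_seqSup_le_tsum {m : α → ℝ} (hm : IsFinAddMeasure m) (f : ℕ → α) :
    pm m (seqSup f) ≤ ∑' n, pm m (f n) := by
  refine ENNReal.le_of_forall_pos_le_add fun ε hε _ => ?_
  obtain ⟨δ, hδpos, hδsum⟩ := ENNReal.exists_pos_sum_of_countable
    (ε := (ε : ℝ≥0∞)) (by exact_mod_cast hε.ne') ℕ
  have key : ∀ n : ℕ, ∃ c : ℕ → α, f n ≤ seqSup c ∧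
      ∑' j, ENNReal.ofReal (m (c j)) < pm m (f n) + δ n := by
    intro n
    have hlt : pm m (f n) < pm m (f n) + δ n :=
      ENNReal.lt_add_right (pm_ne_top hm (f n)) (by exact_mod_cast (hδpos n).ne')
    obtain ⟨⟨c, hc⟩, hlt2⟩ := iInf_lt_iff.mp
      (show (⨅ c : {c : ℕ → α // f n ≤ seqSup c},
        ∑' j, ENNReal.ofReal (m (c.1 j))) < pm m (f n) + δ n from hlt)
    exact ⟨c, hc, hlt2⟩
  choose C hC1 hC2 using key
  set e : ℕ → α := fun i => C (Nat.pairEquiv.symm i).1 (Nat.pairEquiv.symm i).2 with he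
  have hcover : seqSup f ≤ seqSup e := by
    refine seqSup_le _ _ fun n => (hC1 n).trans (seqSup_le _ _ fun j => ?_)
    have : C n j = e (Nat.pairEquiv (n, j)) := by
      rw [he]; simp
    rw [this]
    exact le_seqSup e _
  have htsum : ∑' i, ENNReal.ofReal (m (e i)) =
      ∑' n, ∑' j, ENNReal.ofReal (m (C n j)) := by
    rw [← ENNReal.tsum_prod (f := fun n j => ENNReal.ofReal (m (C n j)))]
    rw [← Equiv.tsum_eq Nat.pairEquiv (fun i => ENNReal.ofReal (m (e i)))]
    congr 1
    funext p
    obtain ⟨n1, j1⟩ := p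
    rw [he]
    simp [Function.uncurry]
  calc pm m (seqSup f) ≤ ∑' i, ENNReal.ofReal (m (e i)) := pm_le_of_cover m hcover
    _ = ∑' n, ∑' j, ENNReal.ofReal (m (C n j)) := htsum
    _ ≤ ∑' n, (pm m (f n) + δ n) := ENNReal.tsum_le_tsum fun n => (hC2 n).le
    _ = ∑' n, pm m (f n) + ∑' n, (δ n : ℝ≥0∞) := ENNReal.tsum_add
    _ ≤ ∑' n, pm m (f n) + ε := by
        exact add_le_add le_rfl hδsum.le

theorem pm_add {m : α → ℝ} (hm : IsFinAddMeasure m) {a b : α} (hab : a ⊓ b = ⊥) :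
    pm m (a ⊔ b) = pm m a + pm m b := by
  classical
  set f : ℕ → α := fun n => if n = 0 then a else if n = 1 then b else ⊥ with hf
  have hsup : seqSup f = a ⊔ b := by
    apply le_antisymm
    · refine seqSup_le _ _ fun n => ?_
      rcases n with _ | n
      · simpa [hf] using le_sup_left
      · rcases n with _ | n
        · simpa [hf] using le_sup_right
        · simp [hf]
    · refine sup_le ?_ ?_
      · simpa [hf] using le_seqSup f 0
      · simpa [hf] using le_seqSup f 1
  have htsum : ∑' n, pm m (f n) = pm m a + pm m b := by
    rw [tsum_eq_sum (s := {0, 1}) (by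
      intro n hn
      simp only [Finset.mem_insert, Finset.mem_singleton] at hn
      push_neg at hn
      have : f n = ⊥ := by simp [hf, hn.1, hn.2]
      rw [this, pm_bot hm])]
    rw [Finset.sum_pair (by norm_num)]
    simp [hf]
  refine le_antisymm ?_ ?_
  · rw [← hsup, ← htsum]
    exact pm_seqSup_le_tsum hm f
  · refine le_pm m fun e he => ?_
    have hca : pm m a ≤ ∑' n, ENNReal.ofReal (m (a ⊓ e n)) :=
      pm_le_of_cover m (cover_inf (le_sup_left.trans he) le_rfl)
    have hcb : pm m b ≤ ∑' n, ENNReal.ofReal (m (b ⊓ e n)) :=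
      pm_le_of_cover m (cover_inf (le_sup_right.trans he) le_rfl)
    calc pm m a + pm m b
        ≤ ∑' n, ENNReal.ofReal (m (a ⊓ e n)) + ∑' n, ENNReal.ofReal (m (b ⊓ e n)) :=
          add_le_add hca hcb
      _ = ∑' n, (ENNReal.ofReal (m (a ⊓ e n)) + ENNReal.ofReal (m (b ⊓ e n))) :=
          ENNReal.tsum_add.symm
      _ ≤ ∑' n, ENNReal.ofReal (m (e n)) := by
          refine ENNReal.tsum_le_tsum fun n => ?_
          rw [← ENNReal.ofReal_add (hm.nonneg _) (hm.nonneg _)]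
          apply ENNReal.ofReal_le_ofReal
          have hdisj : (a ⊓ e n) ⊓ (b ⊓ e n) = ⊥ := by
            apply le_bot_iff.mp
            calc (a ⊓ e n) ⊓ (b ⊓ e n) ≤ a ⊓ b := inf_le_inf inf_le_left inf_le_left
              _ = ⊥ := hab
          rw [← hm.add _ _ hdisj]
          exact hm.mono _ _ (sup_le inf_le_right inf_le_right)

theorem pm_finset {m : α → ℝ} (hm : IsFinAddMeasure m) (f : ℕ → α)
    (hdisj : ∀ i j : ℕ, i ≠ j → f i ⊓ f j = ⊥) (N : ℕ) :
    pm m ((Finset.range N).sup f) = ∑ i ∈ Finset.range N, pm m (f i) := by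
  induction N with
  | zero => simpa using pm_bot hm
  | succ N ih =>
    rw [Finset.range_add_one, Finset.sup_insert, Finset.sum_insert (by simp),
      sup_comm, pm_add hm, ih, add_comm]
    rw [Finset.sup_inf_distrib_right]
    exact (Finset.sup_eq_bot_iff _ _).mpr fun i hi =>
      hdisj i N (by simp at hi; omega)

theorem pm_sigma {m : α → ℝ} (hm : IsFinAddMeasure m) (f : ℕ → α)
    (hdisj : ∀ i j : ℕ, i ≠ j → f i ⊓ f j = ⊥) :
    ∑' n, pm m (f n) = pm m (seqSup f) := by
  refine le_antisymm ?_ (pm_seqSup_le_tsum hm f)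
  rw [ENNReal.tsum_eq_iSup_sum]
  refine iSup_le fun s => ?_
  obtain ⟨N, hN⟩ : ∃ N, s ⊆ Finset.range N :=
    ⟨(s.sup id) + 1, fun i hi => Finset.mem_range.mpr (Nat.lt_succ_of_le (Finset.le_sup (f := id) hi))⟩
  calc ∑ i ∈ s, pm m (f i) ≤ ∑ i ∈ Finset.range N, pm m (f i) :=
        Finset.sum_le_sum_of_subset hN
    _ = pm m ((Finset.range N).sup f) := (pm_finset hm f hdisj N).symm
    _ ≤ pm m (seqSup f) := pm_mono m (Finset.sup_le fun i _ => le_seqSup f i)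


theorem le_compl_of_inf_bot {x y : α} (h : x ⊓ y = ⊥) : y ≤ xᶜ :=
  le_compl_iff_disjoint_left.mpr (disjoint_iff.mpr h)

theorem pm_pos {m : α → ℝ} (hm : IsFinAddMeasure m) (hwd : WeaklyDistributive α)
    {a : α} (ha : a ≠ ⊥) : pm m a ≠ 0 := by
  classical
  intro h0
  have hpowpos : ∀ k : ℕ, (0:ℝ≥0∞) < 2⁻¹ ^ k := fun k =>
    pos_iff_ne_zero.mpr (pow_ne_zero _ (ENNReal.inv_ne_zero.mpr (by norm_num)))
  have key : ∀ k : ℕ, ∃ c : ℕ → α, a ≤ seqSup c ∧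
      ∑' j, ENNReal.ofReal (m (c j)) < 2⁻¹ ^ k := by
    intro k
    have hlt : pm m a < 2⁻¹ ^ k := by rw [h0]; exact hpowpos k
    obtain ⟨⟨c, hc⟩, hlt2⟩ := iInf_lt_iff.mp
      (show (⨅ c : {c : ℕ → α // a ≤ seqSup c},
        ∑' j, ENNReal.ofReal (m (c.1 j))) < 2⁻¹ ^ k from hlt)
    exact ⟨c, hc, hlt2⟩
  choose C hC1 hC2 using key
  set d : ℕ → ℕ → α := fun k => dj (fun j => a ⊓ C k j) with hd
  have hdle : ∀ k j, d k j ≤ a := fun k j => (dj_le _ j).trans inf_le_left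
  have hdleC : ∀ k j, d k j ≤ C k j := fun k j => (dj_le _ j).trans inf_le_right
  have hddisj : ∀ k, ∀ i j : ℕ, i ≠ j → d k i ⊓ d k j = ⊥ :=
    fun k i j h => dj_disj _ h
  have hdsup : ∀ k, seqSup (d k) = a := by
    intro k
    rw [hd]
    rw [seqSup_dj, ← inf_seqSup]
    exact inf_eq_left.mpr (hC1 k)
  set W : ℕ → Set α := fun k => (Set.range (d k) \ {⊥}) ∪ ({aᶜ} \ {⊥}) with hW
  have hWmem : ∀ k x, x ∈ W k ↔ ((∃ j, d k j = x) ∧ x ≠ ⊥) ∨ (x = aᶜ ∧ x ≠ ⊥) := by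
    intro k x
    simp only [hW, Set.mem_union, Set.mem_diff, Set.mem_range,
      Set.mem_singleton_iff]
    try tauto
  have hWcma : ∀ k, IsCMA (W k) := by
    intro k
    refine ⟨?_, ⟨⟨?_, ?_⟩, ?_⟩⟩
    · exact ((Set.countable_range (d k)).mono Set.diff_subset).union
        ((Set.countable_singleton _).mono Set.diff_subset)
    · intro hbot
      rcases (hWmem k ⊥).mp hbot with ⟨_, h⟩ | ⟨_, h⟩ <;> exact h rfl
    · intro x hx y hy hxy
      rcases (hWmem k x).mp hx with ⟨⟨i, hi⟩, hxne⟩ | ⟨hxa, hxne⟩ <;>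
        rcases (hWmem k y).mp hy with ⟨⟨j, hj⟩, hyne⟩ | ⟨hya, hyne⟩
      · have hij : i ≠ j := fun h => hxy (by rw [← hi, ← hj, h])
        rw [← hi, ← hj]; exact hddisj k i j hij
      · rw [← hi, hya]
        exact le_bot_iff.mp ((inf_le_inf (hdle k i) le_rfl).trans (by simp))
      · rw [hxa, ← hj, inf_comm]
        exact le_bot_iff.mp ((inf_le_inf (hdle k j) le_rfl).trans (by simp))
      · exact absurd (hxa.trans hya.symm) hxy
    · intro b hb
      by_cases hba : b ⊓ aᶜ = ⊥
      · have hble : b ≤ a := by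
          have h' : aᶜ ⊓ b = ⊥ := by rw [inf_comm]; exact hba
          have := le_compl_of_inf_bot h'
          rwa [compl_compl] at this
        have hexj : ∃ j, b ⊓ d k j ≠ ⊥ := by
          by_contra h
          push_neg at h
          have h1 : ∀ j, d k j ≤ bᶜ := fun j => le_compl_of_inf_bot (h j)
          have h2 : a ≤ bᶜ := (hdsup k) ▸ seqSup_le _ _ h1
          exact hb (le_bot_iff.mp (by
            calc b ≤ b ⊓ a := le_inf le_rfl hble
              _ ≤ b ⊓ bᶜ := inf_le_inf_left b h2
              _ = ⊥ := inf_compl_eq_bot))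
        obtain ⟨j, hj⟩ := hexj
        have hdne : d k j ≠ ⊥ := fun h => hj (by rw [h, inf_bot_eq])
        exact ⟨d k j, (hWmem k _).mpr (Or.inl ⟨⟨j, rfl⟩, hdne⟩),
          fun h => hj (by rwa [inf_comm])⟩
      · have hane : aᶜ ≠ ⊥ := fun h => hba (by rw [h, inf_bot_eq])
        exact ⟨aᶜ, (hWmem k _).mpr (Or.inr ⟨rfl, hane⟩),
          fun h => hba (by rwa [inf_comm])⟩
  obtain ⟨E, hE, hT⟩ := hwd W hWcma
  set b' : ℕ → α := fun k => (E k).sup id with hb'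
  set t : ℕ → α := fun n => seqInf fun k => b' (n + k) with ht
  have hTT : seqSup t = ⊤ := hT
  have hex : ∃ n, a ⊓ t n ≠ ⊥ := by
    by_contra h
    push_neg at h
    have h1 : ∀ n, t n ≤ aᶜ := fun n => le_compl_of_inf_bot (h n)
    have h2 : (⊤:α) ≤ aᶜ := hTT ▸ seqSup_le _ _ h1
    exact ha (le_bot_iff.mp (by
      calc a = a ⊓ ⊤ := (inf_top_eq a).symm
        _ ≤ a ⊓ aᶜ := inf_le_inf_left a h2
        _ = ⊥ := inf_compl_eq_bot))
  obtain ⟨n, hx⟩ := hex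
  set x := a ⊓ t n with hxdef
  have hxle : ∀ k, ENNReal.ofReal (m x) ≤ 2⁻¹ ^ (n + k) := by
    intro k
    have hxb : x ≤ b' (n + k) := inf_le_right.trans (seqInf_le _ k)
    set E' := (E (n+k)).filter (fun e => e ≠ aᶜ) with hE'
    have hxE' : x ≤ E'.sup id := by
      have h1 : x = (E (n+k)).sup (fun e => x ⊓ id e) := by
        conv_lhs => rw [show x = x ⊓ (E (n+k)).sup id from (inf_eq_left.mpr hxb).symm]
        rw [Finset.sup_inf_distrib_left]
      rw [h1]
      refine Finset.sup_le fun e he => ?_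
      by_cases hea : e = aᶜ
      · have : x ⊓ id e ≤ ⊥ := by
          rw [hea]
          calc x ⊓ aᶜ ≤ a ⊓ aᶜ := inf_le_inf_right _ inf_le_left
            _ = ⊥ := inf_compl_eq_bot
        exact this.trans bot_le
      · exact le_trans inf_le_right (Finset.le_sup (Finset.mem_filter.mpr ⟨he, hea⟩))
    have hmem : ∀ e ∈ E', ∃ j, e = d (n+k) j := by
      intro e he
      have he2 : e ∈ E (n+k) := Finset.mem_filter.mp he |>.1
      have hene : e ≠ aᶜ := (Finset.mem_filter.mp he).2
      rcases (hWmem (n+k) e).mp (hE (n+k) he2) with ⟨⟨j, hj⟩, _⟩ | ⟨hea, _⟩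
      · exact ⟨j, hj.symm⟩
      · exact absurd hea hene
    set jc : α → ℕ := fun e => if h : ∃ j, e = d (n+k) j then h.choose else 0 with hjc0
    have hjc : ∀ e ∈ E', e = d (n+k) (jc e) := by
      intro e he
      have h := hmem e he
      simp only [hjc0, dif_pos h]
      exact h.choose_spec
    have hinj : ∀ e1 ∈ E', ∀ e2 ∈ E', jc e1 = jc e2 → e1 = e2 := by
      intro e1 h1 e2 h2 heq
      rw [hjc e1 h1, hjc e2 h2, heq]
    set J := E'.image jc with hJ
    have hsum1 : m x ≤ ∑ e ∈ E', m e := (hm.mono _ _ hxE').trans (hm.finsetSup_le_sum E')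
    have hsum2 : ∑ e ∈ E', m e = ∑ j ∈ J, m (d (n+k) j) := by
      rw [hJ, Finset.sum_image hinj]
      exact Finset.sum_congr rfl fun e he => by rw [← hjc e he]
    calc ENNReal.ofReal (m x) ≤ ENNReal.ofReal (∑ j ∈ J, m (d (n+k) j)) :=
          ENNReal.ofReal_le_ofReal (hsum1.trans_eq hsum2)
      _ = ∑ j ∈ J, ENNReal.ofReal (m (d (n+k) j)) :=
          ENNReal.ofReal_sum_of_nonneg fun j _ => hm.nonneg _
      _ ≤ ∑ j ∈ J, ENNReal.ofReal (m (C (n+k) j)) :=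
          Finset.sum_le_sum fun j _ =>
            ENNReal.ofReal_le_ofReal (hm.mono _ _ (hdleC (n+k) j))
      _ ≤ ∑' j, ENNReal.ofReal (m (C (n+k) j)) := ENNReal.sum_le_tsum J
      _ ≤ 2⁻¹ ^ (n+k) := (hC2 (n+k)).le
  have h0x : ENNReal.ofReal (m x) = 0 := by
    by_contra hne
    obtain ⟨k0, hk0⟩ := ENNReal.exists_inv_two_pow_lt hne
    have h1 := hxle k0
    have h2 : (2⁻¹:ℝ≥0∞) ^ (n + k0) ≤ 2⁻¹ ^ k0 :=
      pow_le_pow_of_le_one zero_le (by simp [ENNReal.inv_le_one]) (Nat.le_add_left k0 n)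
    exact absurd (h1.trans_lt (h2.trans_lt hk0)) (lt_irrefl _)
  have hmx : m x ≤ 0 := by simpa [ENNReal.ofReal_eq_zero] using h0x
  exact absurd hmx (not_le.mpr (hm.pos x hx))

end BooleanSigmaAlgebra

open BooleanSigmaAlgebra

/-- **Pinsker–Kelley.** A Boolean σ-algebra `B` carries a measure if and only
if it is weakly distributive and carries a strictly positive finitely additive
measure. -/
theorem carries_measure_iff_weaklyDistributive_and_finAddMeasure
    (α : Type u) [BooleanSigmaAlgebra α] :
    (∃ m : α → ℝ, IsMeasure m) ↔
      WeaklyDistributive α ∧ ∃ m : α → ℝ, IsFinAddMeasure m := by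
  constructor
  · rintro ⟨m, hm⟩
    exact ⟨hm.weaklyDistributive, m, hm.toIsFinAddMeasure⟩
  · rintro ⟨hwd, m, hm⟩
    have htop : (⊤:α) ≠ ⊥ := fun h => by
      have h1 := hm.map_top; rw [h, hm.map_bot] at h1; norm_num at h1
    set T : ℝ := (pm m ⊤).toReal with hTdef
    have hT0 : 0 < T :=
      ENNReal.toReal_pos (pm_pos hm hwd htop) (pm_ne_top hm ⊤)
    refine ⟨fun a => (pm m a).toReal / T, ⟨?_, ?_, ?_, ?_, ?_⟩, ?_⟩
    · rw [pm_bot hm]; simp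
    · intro a ha
      exact div_pos (ENNReal.toReal_pos (pm_pos hm hwd ha) (pm_ne_top hm a)) hT0
    · exact div_self hT0.ne'
    · intro a b hab
      have h1 : (pm m a).toReal ≤ (pm m b).toReal :=
        (ENNReal.toReal_le_toReal (pm_ne_top hm a) (pm_ne_top hm b)).mpr (pm_mono m hab)
      exact div_le_div_of_nonneg_right h1 hT0.le
    · intro a b hab
      rw [pm_add hm hab, ENNReal.toReal_add (pm_ne_top hm a) (pm_ne_top hm b), add_div]
    · intro f hdisj
      have hts : ∑' n, pm m (f n) = pm m (seqSup f) := pm_sigma hm f hdisj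
      have hne : ∑' n, pm m (f n) ≠ ⊤ := by rw [hts]; exact pm_ne_top hm _
      have h1 := ENNReal.hasSum_toReal hne
      have h2 : ∑' n, (pm m (f n)).toReal = (pm m (seqSup f)).toReal := by
        rw [← hts, ENNReal.tsum_toReal_eq fun n => pm_ne_top hm (f n)]
      rw [h2] at h1
      exact h1.div_const T
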